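/- Let μ > 0, v₀ > 0 and 0 < k < Λ < ∞. Define the cutoff self-energy at z ∈ ℂ by Σ_k^Λ(z) = (1/(4π²)) ∫_k^Λ ∫_{−k}^{k} h(k,p,l)² · p · l / (8k · (z − e(p) − e(l))) ds dt, where p = (t+s)/2 and l = (t−s)/2. Then: (i) Σ_k^Λ(0) is finite (the integrand extends to a bounded measurable function on the compact integration region, since e(p) + e(l) ≥ √μ·t there); (ii) for every z ∈ ℂ with Im z > 0, the function (t,s) ↦ z · h(k,p,l)² · p · l / (8k · (z − e(p) − e(l)) · (e(p) + e(l))) is Lebesgue integrable on (k,∞) × (−k,k), and lim_{Λ→∞} ( Σ_k^Λ(z) − Σ_k^Λ(0) ) exists and equals (1/(4π²)) times the integral of this function over (k,∞) × (−k,k). -/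

import Mathlib

open Real Filter Asymptotics Topology MeasureTheory

/-- Bogoliubov dispersion relation (contact interaction). -/
noncomputable def disp (μ k : ℝ) : ℝ := Real.sqrt (k^4/4 + μ*k^2)

/-- Bogoliubov coefficient σ. -/
noncomputable def sig (μ k : ℝ) : ℝ :=
  Real.sqrt ((Real.sqrt ((disp μ k)^2 + μ^2) + disp μ k) / (2 * disp μ k))

/-- Bogoliubov coefficient γ. -/
noncomputable def gam (μ k : ℝ) : ℝ :=
  Real.sqrt ((Real.sqrt ((disp μ k)^2 + μ^2) - disp μ k) / (2 * disp μ k))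

/-- Cubic coupling function h(k,p,l). -/
noncomputable def hcub (μ v₀ k p l : ℝ) : ℝ :=
  2 * Real.sqrt (μ * v₀) *
    (sig μ p * gam μ k * gam μ l + sig μ l * gam μ k * gam μ p
      + sig μ p * sig μ l * sig μ k - gam μ p * sig μ k * sig μ l
      - gam μ l * sig μ k * sig μ p - gam μ p * gam μ l * gam μ k)

noncomputable def A1 (μ x y : ℝ) : ℝ := Real.sqrt ((x + y)^2 + 4*μ^2)
noncomputable def A2 (μ x y : ℝ) : ℝ := Real.sqrt ((x - y)^2 + 4*μ^2)

/-- The cutoff self-energy Σ_k^Λ(z) in the variables t = p+l, s = p−l. -/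
noncomputable def SigmaCut (μ v₀ k Λ : ℝ) (z : ℂ) : ℂ :=
  (1/(4*(Real.pi : ℂ)^2)) * ∫ t in k..Λ, ∫ s in (-k)..k,
    ((hcub μ v₀ k ((t+s)/2) ((t-s)/2) : ℝ) : ℂ)^2
        * (((t+s)/2 : ℝ) : ℂ) * (((t-s)/2 : ℝ) : ℂ)
      / (((8*k : ℝ) : ℂ) * (z - ((disp μ ((t+s)/2) : ℝ) : ℂ)
            - ((disp μ ((t-s)/2) : ℝ) : ℂ)))

/-- The integrand of the renormalized self-energy (after subtracting Σ_k^Λ(0)). -/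
noncomputable def renInt (μ v₀ k : ℝ) (z : ℂ) (ts : ℝ × ℝ) : ℂ :=
  z * ((hcub μ v₀ k ((ts.1+ts.2)/2) ((ts.1-ts.2)/2) : ℝ) : ℂ)^2
      * (((ts.1+ts.2)/2 : ℝ) : ℂ) * (((ts.1-ts.2)/2 : ℝ) : ℂ)
    / (((8*k : ℝ) : ℂ)
        * (z - ((disp μ ((ts.1+ts.2)/2) : ℝ) : ℂ) - ((disp μ ((ts.1-ts.2)/2) : ℝ) : ℂ))
        * (((disp μ ((ts.1+ts.2)/2) + disp μ ((ts.1-ts.2)/2) : ℝ) : ℂ)))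

lemma st16_disp_nonneg (μ x : ℝ) : 0 ≤ disp μ x := Real.sqrt_nonneg _

lemma st16_disp_ge (μ : ℝ) {x : ℝ} (hμ : 0 ≤ μ) (hx : 0 ≤ x) :
    Real.sqrt μ * x ≤ disp μ x := by
  have : Real.sqrt μ * x = Real.sqrt (μ * x^2) := by
    rw [Real.sqrt_mul hμ, Real.sqrt_sq hx]
  rw [this]
  exact Real.sqrt_le_sqrt (by nlinarith)

lemma st16_disp_ge_sq (μ : ℝ) {x : ℝ} (hμ : 0 ≤ μ) : x^2/2 ≤ disp μ x := by
  have : x^2/2 = Real.sqrt ((x^2/2)^2) := by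
    rw [Real.sqrt_sq (by positivity)]
  rw [this]
  exact Real.sqrt_le_sqrt (by nlinarith)

lemma st16_disp_pos {μ x : ℝ} (hμ : 0 < μ) (hx : 0 < x) : 0 < disp μ x :=
  lt_of_lt_of_le (by positivity) (st16_disp_ge μ hμ.le hx.le)

lemma st16_sig_le {μ x : ℝ} (hμ : 0 < μ) (hx : 0 < x) :
    sig μ x ≤ Real.sqrt (1 + Real.sqrt μ / x) := by
  apply Real.sqrt_le_sqrt
  set e := disp μ x with he
  have hep : 0 < e := st16_disp_pos hμ hx
  have h1 : Real.sqrt (e^2 + μ^2) ≤ e + μ := by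
    have : Real.sqrt (e^2 + μ^2) ≤ Real.sqrt ((e+μ)^2) :=
      Real.sqrt_le_sqrt (by nlinarith)
    rwa [Real.sqrt_sq (by positivity)] at this
  have h2 : Real.sqrt μ * x ≤ e := st16_disp_ge μ hμ.le hx.le
  have h3 : Real.sqrt μ * Real.sqrt μ = μ := Real.mul_self_sqrt hμ.le
  have hsμ : 0 < Real.sqrt μ := Real.sqrt_pos.mpr hμ
  have hx4 : (1 : ℝ) + Real.sqrt μ / x = (x + Real.sqrt μ)/x := by field_simp
  rw [hx4, div_le_div_iff₀ (by positivity) hx]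
  nlinarith [mul_le_mul_of_nonneg_right h1 hx.le,
    mul_le_mul_of_nonneg_left h2 hsμ.le]

lemma st16_gam_le {μ x : ℝ} (hμ : 0 < μ) (hx : 0 < x) :
    gam μ x ≤ Real.sqrt (1 + Real.sqrt μ / x) := by
  apply Real.sqrt_le_sqrt
  set e := disp μ x with he
  have hep : 0 < e := st16_disp_pos hμ hx
  have h1 : Real.sqrt (e^2 + μ^2) ≤ e + μ := by
    have : Real.sqrt (e^2 + μ^2) ≤ Real.sqrt ((e+μ)^2) :=
      Real.sqrt_le_sqrt (by nlinarith)
    rwa [Real.sqrt_sq (by positivity)] at this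
  have h2 : Real.sqrt μ * x ≤ e := st16_disp_ge μ hμ.le hx.le
  have h3 : Real.sqrt μ * Real.sqrt μ = μ := Real.mul_self_sqrt hμ.le
  have hsμ : 0 < Real.sqrt μ := Real.sqrt_pos.mpr hμ
  have hx4 : (1 : ℝ) + Real.sqrt μ / x = (x + Real.sqrt μ)/x := by field_simp
  rw [hx4, div_le_div_iff₀ (by positivity) hx]
  nlinarith [mul_le_mul_of_nonneg_right h1 hx.le,
    mul_le_mul_of_nonneg_left h2 hsμ.le]

lemma st16_sig_nonneg (μ x : ℝ) : 0 ≤ sig μ x := Real.sqrt_nonneg _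
lemma st16_gam_nonneg (μ x : ℝ) : 0 ≤ gam μ x := Real.sqrt_nonneg _

lemma st16_hcub_bound {μ v₀ k p l : ℝ} (hμ : 0 < μ) (hv : 0 < v₀)
    (hk : 0 < k) (hp : 0 < p) (hl : 0 < l) :
    hcub μ v₀ k p l ^ 2 * p * l
      ≤ 36 * μ * v₀ * (1 + Real.sqrt μ / k) * ((p + Real.sqrt μ) * (l + Real.sqrt μ)) := by
  set B : ℝ → ℝ := fun x => Real.sqrt (1 + Real.sqrt μ / x) with hB
  have hBnn : ∀ x, 0 ≤ B x := fun x => Real.sqrt_nonneg _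
  have hBsq : ∀ {x : ℝ}, 0 < x → B x ^ 2 = 1 + Real.sqrt μ / x := by
    intro x hx
    exact Real.sq_sqrt (by positivity)
  have hb : ∀ {x : ℝ}, 0 < x → sig μ x ≤ B x ∧ gam μ x ≤ B x := fun hx =>
    ⟨st16_sig_le hμ hx, st16_gam_le hμ hx⟩
  obtain ⟨hsp, hgp⟩ := hb hp
  obtain ⟨hsl, hgl⟩ := hb hl
  obtain ⟨hsk, hgk⟩ := hb hk
  have hsn : ∀ x, 0 ≤ sig μ x := fun _ => Real.sqrt_nonneg _
  have hgn : ∀ x, 0 ≤ gam μ x := fun _ => Real.sqrt_nonneg _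
  set E : ℝ := sig μ p * gam μ k * gam μ l + sig μ l * gam μ k * gam μ p
      + sig μ p * sig μ l * sig μ k - gam μ p * sig μ k * sig μ l
      - gam μ l * sig μ k * sig μ p - gam μ p * gam μ l * gam μ k with hE
  have hterm : ∀ a b c : ℝ, 0 ≤ a → 0 ≤ b → 0 ≤ c → a ≤ B p → b ≤ B k → c ≤ B l →
      a * b * c ≤ B p * B k * B l := by
    intro a b c ha hb' hc h1 h2 h3
    exact mul_le_mul (mul_le_mul h1 h2 hb' (hBnn p)) h3 hc (by positivity)
  have hEle : |E| ≤ 3 * (B p * B k * B l) := by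
    have t1 := hterm _ _ _ (hsn p) (hgn k) (hgn l) hsp hgk hgl
    have t2 := hterm _ _ _ (hgn p) (hgn k) (hsn l) hgp hgk hsl
    have t3 := hterm _ _ _ (hsn p) (hsn k) (hsn l) hsp hsk hsl
    have t4 := hterm _ _ _ (hgn p) (hsn k) (hsn l) hgp hsk hsl
    have t5 := hterm _ _ _ (hsn p) (hsn k) (hgn l) hsp hsk hgl
    have t6 := hterm _ _ _ (hgn p) (hgn k) (hgn l) hgp hgk hgl
    rw [abs_le]
    constructor <;> nlinarith [mul_nonneg (mul_nonneg (hsn p) (hgn k)) (hgn l),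
      mul_nonneg (mul_nonneg (hsn l) (hgn k)) (hgn p),
      mul_nonneg (mul_nonneg (hsn p) (hsn l)) (hsn k),
      mul_nonneg (mul_nonneg (hgn p) (hsn k)) (hsn l),
      mul_nonneg (mul_nonneg (hgn l) (hsn k)) (hsn p),
      mul_nonneg (mul_nonneg (hgn p) (hgn l)) (hgn k)]
  have hEsq : E ^ 2 ≤ 9 * (B p ^2 * B k ^2 * B l ^2) := by
    have h9 : E^2 ≤ (3 * (B p * B k * B l))^2 := by
      rw [← sq_abs E]
      exact pow_le_pow_left₀ (abs_nonneg E) hEle 2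
    nlinarith [h9]
  have hform : hcub μ v₀ k p l = 2 * Real.sqrt (μ * v₀) * E := rfl
  have hcsq : hcub μ v₀ k p l ^ 2 = 4 * (μ * v₀) * E ^ 2 := by
    rw [hform]
    have hs : Real.sqrt (μ * v₀) ^ 2 = μ * v₀ := Real.sq_sqrt (by positivity)
    rw [mul_pow, mul_pow, hs]; ring
  rw [hcsq]
  have hfin : (4 : ℝ) * (μ * v₀) * E ^ 2 ≤ 36 * (μ * v₀) * (B k ^2 * (B p ^2 * B l ^2)) := by
    nlinarith [hEsq, mul_pos hμ hv]
  calc 4 * (μ * v₀) * E ^ 2 * p * l ≤ 36 * (μ * v₀) * (B k ^2 * (B p ^2 * B l ^2)) * p * l := by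
        nlinarith [hfin, mul_pos hp hl, sq_nonneg E, mul_pos hμ hv]
    _ = 36 * μ * v₀ * (B k ^ 2) * ((B p ^2 * p) * (B l ^2 * l)) := by ring
    _ = 36 * μ * v₀ * (1 + Real.sqrt μ / k) * ((p + Real.sqrt μ) * (l + Real.sqrt μ)) := by
        rw [hBsq hp, hBsq hl, hBsq hk]
        field_simp

lemma st16_meas_disp (μ : ℝ) : Measurable (disp μ) := by
  unfold disp; fun_prop

lemma st16_meas_sig (μ : ℝ) : Measurable (sig μ) := by
  unfold sig disp; fun_prop

lemma st16_meas_gam (μ : ℝ) : Measurable (gam μ) := by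
  unfold gam disp; fun_prop

lemma st16_meas_hcub (μ v₀ k : ℝ) :
    Measurable (fun ts : ℝ × ℝ => hcub μ v₀ k ((ts.1+ts.2)/2) ((ts.1-ts.2)/2)) := by
  have hp : Measurable (fun ts : ℝ × ℝ => (ts.1+ts.2)/2) := by fun_prop
  have hl : Measurable (fun ts : ℝ × ℝ => (ts.1-ts.2)/2) := by fun_prop
  unfold hcub
  exact (measurable_const.mul ((((((st16_meas_sig μ).comp hp).mul measurable_const).mul
      ((st16_meas_gam μ).comp hl)).add ((((st16_meas_sig μ).comp hl).mul
      measurable_const).mul ((st16_meas_gam μ).comp hp))).add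
      ((((st16_meas_sig μ).comp hp).mul ((st16_meas_sig μ).comp hl)).mul measurable_const)
      |>.sub ((((st16_meas_gam μ).comp hp).mul measurable_const).mul
      ((st16_meas_sig μ).comp hl))
      |>.sub ((((st16_meas_gam μ).comp hl).mul measurable_const).mul
      ((st16_meas_sig μ).comp hp))
      |>.sub ((((st16_meas_gam μ).comp hp).mul ((st16_meas_gam μ).comp hl)).mul
      measurable_const)))

lemma st16_meas_renInt (μ v₀ k : ℝ) (z : ℂ) : Measurable (renInt μ v₀ k z) := by
  have hp : Measurable (fun ts : ℝ × ℝ => (ts.1+ts.2)/2) := by fun_prop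
  have hl : Measurable (fun ts : ℝ × ℝ => (ts.1-ts.2)/2) := by fun_prop
  have hh := st16_meas_hcub μ v₀ k
  have hd := st16_meas_disp μ
  unfold renInt
  apply Measurable.div
  · fun_prop
  · fun_prop

/-- the middle conjunct -/
lemma st16_E_lower {μ k t s : ℝ} (hμ : 0 < μ) (hk : 0 < k) (ht : k < t)
    (hs1 : -k < s) (hs2 : s < k) :
    Real.sqrt μ * t ≤ disp μ ((t+s)/2) + disp μ ((t-s)/2) := by
  have hp : (0:ℝ) ≤ (t+s)/2 := by linarith
  have hl : (0:ℝ) ≤ (t-s)/2 := by linarith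
  have h1 := st16_disp_ge μ hμ.le hp
  have h2 := st16_disp_ge μ hμ.le hl
  nlinarith [h1, h2]

lemma st16_E_sq {μ t s : ℝ} (hμ : 0 ≤ μ) :
    t^2/4 ≤ disp μ ((t+s)/2) + disp μ ((t-s)/2) := by
  have h1 := st16_disp_ge_sq μ (x := (t+s)/2) hμ
  have h2 := st16_disp_ge_sq μ (x := (t-s)/2) hμ
  nlinarith [h1, h2, sq_nonneg s]

/-- norm formula for renInt on the region -/
lemma st16_norm_renInt {μ v₀ k : ℝ} (z : ℂ) {ts : ℝ × ℝ} (hk : 0 < k)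
    (hp : 0 ≤ (ts.1+ts.2)/2) (hl : 0 ≤ (ts.1-ts.2)/2) :
    ‖renInt μ v₀ k z ts‖
      = ‖z‖ * (hcub μ v₀ k ((ts.1+ts.2)/2) ((ts.1-ts.2)/2) ^ 2 * ((ts.1+ts.2)/2) * ((ts.1-ts.2)/2))
        / (8*k * ‖z - ((disp μ ((ts.1+ts.2)/2) : ℝ) : ℂ) - ((disp μ ((ts.1-ts.2)/2) : ℝ) : ℂ)‖
            * (disp μ ((ts.1+ts.2)/2) + disp μ ((ts.1-ts.2)/2))) := by
  have hE : (0:ℝ) ≤ disp μ ((ts.1+ts.2)/2) + disp μ ((ts.1-ts.2)/2) :=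
    add_nonneg (st16_disp_nonneg _ _) (st16_disp_nonneg _ _)
  unfold renInt
  rw [norm_div, norm_mul, norm_mul, norm_mul, norm_mul, norm_mul, norm_pow]
  simp only [Complex.norm_real, Real.norm_eq_abs]
  rw [abs_of_nonneg hp, abs_of_nonneg hl, abs_of_nonneg hE, abs_of_nonneg (by positivity : (0:ℝ) ≤ 8*k),
    sq_abs]
  ring

lemma st16_lower_im (z : ℂ) (dp dl : ℝ) :
    z.im ≤ ‖z - (dp : ℂ) - (dl : ℂ)‖ := by
  have h1 : (z - (dp : ℂ) - (dl : ℂ)).im = z.im := by simp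
  calc z.im ≤ |(z - (dp : ℂ) - (dl : ℂ)).im| := by rw [h1]; exact le_abs_self _
    _ ≤ ‖z - (dp : ℂ) - (dl : ℂ)‖ := Complex.abs_im_le_norm _

lemma st16_lower_E (z : ℂ) {dp dl : ℝ} (hdp : 0 ≤ dp) (hdl : 0 ≤ dl) :
    dp + dl - ‖z‖ ≤ ‖z - (dp : ℂ) - (dl : ℂ)‖ := by
  have : ‖((dp : ℂ) + dl)‖ - ‖z‖ ≤ ‖z - ((dp:ℂ) + dl)‖ := by
    have := norm_sub_norm_le (((dp:ℂ) + dl)) z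
    calc ‖((dp : ℂ) + dl)‖ - ‖z‖ ≤ ‖((dp:ℂ) + dl) - z‖ := norm_sub_norm_le _ _
      _ = ‖z - ((dp:ℂ) + dl)‖ := norm_sub_rev _ _
  have h2 : ‖((dp : ℂ) + dl)‖ = dp + dl := by
    rw [← Complex.ofReal_add, Complex.norm_real, Real.norm_eq_abs, abs_of_nonneg (by linarith)]
  rw [h2] at this
  calc dp + dl - ‖z‖ ≤ ‖z - ((dp:ℂ) + dl)‖ := this
    _ = ‖z - (dp : ℂ) - (dl : ℂ)‖ := by rw [sub_sub]

lemma st16_div_helper (x ck aa kk tt : ℝ) (hk : kk ≠ 0) (ht : tt ≠ 0) :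
    x * (ck * aa^2 * tt^2) / (8*kk*(tt^2/8)*(tt^2/4)) = (4*x*ck*aa^2/kk) / tt^2 := by
  field_simp

set_option maxHeartbeats 1000000 in
lemma st16_bound_exists {μ v₀ k : ℝ} (hμ : 0 < μ) (hv : 0 < v₀) (hk : 0 < k)
    (z : ℂ) (hz : 0 < z.im) :
    ∃ C : ℝ, ∀ ts : ℝ × ℝ, ts ∈ Set.Ioi k ×ˢ Set.Ioo (-k) k →
      ‖renInt μ v₀ k z ts‖ ≤ C / ts.1^2 := by
  set a : ℝ := 1 + Real.sqrt μ / k with ha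
  have ha0 : 0 < a := by rw [ha]; positivity
  set Ck : ℝ := 36 * μ * v₀ * a with hCk
  have hCk0 : 0 < Ck := by rw [hCk]; positivity
  set T : ℝ := Real.sqrt (8*(‖z‖+1)) with hT
  have hT0 : 0 < T := Real.sqrt_pos.mpr (by positivity)
  have hT2 : T^2 = 8*(‖z‖+1) := Real.sq_sqrt (by positivity)
  have hz0 : 0 < ‖z‖ := by
    rw [norm_pos_iff]
    intro h; rw [h] at hz; simp at hz
  have hd20 : (0:ℝ) < 8*k*z.im*(Real.sqrt μ * k) :=
    mul_pos (mul_pos (by positivity) hz) (by positivity)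
  set C₁ : ℝ := 4*‖z‖*Ck*a^2/k with hC₁
  have hC₁0 : 0 < C₁ := by rw [hC₁]; positivity
  set K : ℝ := ‖z‖*Ck*a^2/(8*k*z.im*(Real.sqrt μ * k)) with hK
  have hK0 : 0 < K := div_pos (by positivity) hd20
  set C₂ : ℝ := K * (T^2 * T^2) with hC₂
  have hC₂0 : 0 < C₂ := by rw [hC₂]; positivity
  clear_value a Ck T C₁ K C₂
  refine ⟨C₁ + C₂, ?_⟩
  rintro ⟨t, s⟩ ⟨ht, hs1, hs2⟩
  simp only [Set.mem_Ioi, Set.mem_Ioo] at ht hs1 hs2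
  show ‖renInt μ v₀ k z (t, s)‖ ≤ (C₁ + C₂) / t^2
  have ht0 : 0 < t := hk.trans ht
  have hp : 0 < (t+s)/2 := by linarith
  have hl : 0 < (t-s)/2 := by linarith
  have hdp := st16_disp_nonneg μ ((t+s)/2)
  have hdl := st16_disp_nonneg μ ((t-s)/2)
  have hEμ : Real.sqrt μ * k ≤ disp μ ((t+s)/2) + disp μ ((t-s)/2) := by
    have := st16_E_lower (t := t) (s := s) hμ hk ht hs1 hs2
    have h2 : Real.sqrt μ * k ≤ Real.sqrt μ * t :=
      mul_le_mul_of_nonneg_left ht.le (Real.sqrt_nonneg μ)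
    linarith
  have hEsq : t^2/4 ≤ disp μ ((t+s)/2) + disp μ ((t-s)/2) := st16_E_sq hμ.le
  have hnum : hcub μ v₀ k ((t+s)/2) ((t-s)/2) ^ 2 * ((t+s)/2) * ((t-s)/2)
      ≤ Ck * a^2 * t^2 := by
    have h1 := st16_hcub_bound (p := (t+s)/2) (l := (t-s)/2) hμ hv hk hp hl
    rw [← ha] at h1
    have h2 : Real.sqrt μ ≤ Real.sqrt μ * t / k := by
      rw [le_div_iff₀ hk]
      nlinarith [Real.sqrt_nonneg μ]
    have hat : a * t = t + Real.sqrt μ * t / k := by rw [ha]; ring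
    have hpa : (t+s)/2 + Real.sqrt μ ≤ a * t := by
      have h3 : (t+s)/2 ≤ t := by linarith
      rw [hat]; linarith
    have hla : (t-s)/2 + Real.sqrt μ ≤ a * t := by
      have h3 : (t-s)/2 ≤ t := by linarith
      rw [hat]; linarith
    have hprod : ((t+s)/2 + Real.sqrt μ) * ((t-s)/2 + Real.sqrt μ) ≤ (a*t)*(a*t) :=
      mul_le_mul hpa hla (by positivity) (by positivity)
    calc hcub μ v₀ k ((t+s)/2) ((t-s)/2) ^ 2 * ((t+s)/2) * ((t-s)/2)
        ≤ 36 * μ * v₀ * a * (((t+s)/2 + Real.sqrt μ) * ((t-s)/2 + Real.sqrt μ)) := h1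
      _ ≤ 36 * μ * v₀ * a * ((a*t)*(a*t)) :=
          mul_le_mul_of_nonneg_left hprod (by positivity)
      _ = Ck * a^2 * t^2 := by rw [hCk]; ring
  rw [st16_norm_renInt z hk hp.le hl.le]
  show ‖z‖ * (hcub μ v₀ k ((t+s)/2) ((t-s)/2) ^ 2 * ((t+s)/2) * ((t-s)/2))
      / (8*k*‖z - ((disp μ ((t+s)/2) : ℝ) : ℂ) - ((disp μ ((t-s)/2) : ℝ) : ℂ)‖
          * (disp μ ((t+s)/2) + disp μ ((t-s)/2))) ≤ (C₁ + C₂) / t^2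
  set nrm : ℝ := ‖z - ((disp μ ((t+s)/2) : ℝ) : ℂ) - ((disp μ ((t-s)/2) : ℝ) : ℂ)‖ with hnrm
  set E : ℝ := disp μ ((t+s)/2) + disp μ ((t-s)/2) with hE
  clear_value nrm E
  have hnn : ‖z‖ * (hcub μ v₀ k ((t+s)/2) ((t-s)/2) ^ 2 * ((t+s)/2) * ((t-s)/2))
      ≤ ‖z‖ * (Ck * a^2 * t^2) := mul_le_mul_of_nonneg_left hnum (norm_nonneg z)
  have him : z.im ≤ nrm := by rw [hnrm]; exact st16_lower_im z _ _
  have hEn : E - ‖z‖ ≤ nrm := by rw [hnrm, hE]; exact st16_lower_E z hdp hdl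
  by_cases hcase : T ≤ t
  · have ht2 : T^2 ≤ t^2 := by
      have := pow_le_pow_left₀ hT0.le hcase 2
      linarith
    have hnrm8 : t^2/8 ≤ nrm := by linarith
    have hden : 8*k*(t^2/8)*(t^2/4) ≤ 8*k*nrm*E := by
      have h1 : 8*k*(t^2/8) ≤ 8*k*nrm :=
        mul_le_mul_of_nonneg_left hnrm8 (by positivity)
      calc 8*k*(t^2/8)*(t^2/4) ≤ 8*k*nrm*(t^2/4) :=
            mul_le_mul_of_nonneg_right h1 (by positivity)
        _ ≤ 8*k*nrm*E := by
            apply mul_le_mul_of_nonneg_left hEsq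
            have : (0:ℝ) ≤ nrm := le_trans hz.le him
            positivity
    have hd0 : (0:ℝ) < 8*k*(t^2/8)*(t^2/4) := by positivity
    calc ‖z‖ * (hcub μ v₀ k ((t+s)/2) ((t-s)/2) ^ 2 * ((t+s)/2) * ((t-s)/2)) / (8*k*nrm*E)
        ≤ (‖z‖ * (Ck * a^2 * t^2)) / (8*k*(t^2/8)*(t^2/4)) :=
          div_le_div₀ (by positivity) hnn hd0 hden
      _ = C₁ / t^2 := by rw [hC₁]; exact st16_div_helper _ _ _ _ _ hk.ne' ht0.ne'
      _ ≤ (C₁ + C₂) / t^2 := by gcongr; linarith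
  · push_neg at hcase
    have ht2 : t^2 ≤ T^2 := by
      have := pow_le_pow_left₀ ht0.le hcase.le 2
      linarith
    have hden : 8*k*z.im*(Real.sqrt μ * k) ≤ 8*k*nrm*E := by
      have h1 : 8*k*z.im ≤ 8*k*nrm := mul_le_mul_of_nonneg_left him (by positivity)
      have hnrm0 : (0:ℝ) ≤ nrm := le_trans hz.le him
      calc 8*k*z.im*(Real.sqrt μ * k) ≤ 8*k*nrm*(Real.sqrt μ * k) :=
            mul_le_mul_of_nonneg_right h1 (by positivity)
        _ ≤ 8*k*nrm*E := mul_le_mul_of_nonneg_left hEμ (by positivity)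
    calc ‖z‖ * (hcub μ v₀ k ((t+s)/2) ((t-s)/2) ^ 2 * ((t+s)/2) * ((t-s)/2)) / (8*k*nrm*E)
        ≤ (‖z‖ * (Ck * a^2 * t^2)) / (8*k*z.im*(Real.sqrt μ * k)) :=
          div_le_div₀ (by positivity) hnn hd20 hden
      _ = K * t^2 := by rw [hK]; ring
      _ ≤ C₂ / t^2 := by
          rw [le_div_iff₀ (by positivity : (0:ℝ) < t^2), hC₂]
          have h4 : t^2*t^2 ≤ T^2*T^2 := by nlinarith [ht2, sq_nonneg t, sq_nonneg T]
          calc K * t^2 * t^2 = K * (t^2*t^2) := by ring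
            _ ≤ K * (T^2*T^2) := mul_le_mul_of_nonneg_left h4 hK0.le
      _ ≤ (C₁ + C₂) / t^2 := by gcongr; linarith

lemma st16_dom_integrable {k : ℝ} (hk : 0 < k) (C : ℝ) :
    IntegrableOn (fun ts : ℝ × ℝ => C / ts.1^2) (Set.Ioi k ×ˢ Set.Ioo (-k) k) := by
  rw [IntegrableOn, Measure.volume_eq_prod, ← Measure.prod_restrict]
  have h1 : Integrable (fun t : ℝ => C / t^2) (volume.restrict (Set.Ioi k)) := by
    have h0 : IntegrableOn (fun x : ℝ => x ^ (-2 : ℝ)) (Set.Ioi k) :=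
      integrableOn_Ioi_rpow_of_lt (by norm_num) hk
    have h3 : IntegrableOn (fun x : ℝ => C * x ^ (-2:ℝ)) (Set.Ioi k) := h0.const_mul C
    refine h3.congr_fun (g := fun t : ℝ => C / t^2) (fun x hx => ?_) measurableSet_Ioi
    have hx0 : (0:ℝ) < x := hk.trans hx
    have h4 : x ^ (-2:ℝ) = (x^(2:ℕ))⁻¹ := by
      rw [Real.rpow_neg hx0.le, ← Real.rpow_natCast x 2]
      norm_num
    beta_reduce
    rw [h4]
    ring
  have h2 : Integrable (fun _ : ℝ => (1:ℝ)) (volume.restrict (Set.Ioo (-k) k)) := by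
    rw [← IntegrableOn]
    refine (integrableOn_const_iff enorm_ne_top).mpr (Or.inr ?_)
    rw [Real.volume_Ioo]
    exact ENNReal.ofReal_lt_top
  have := h1.mul_prod h2
  simpa using this

lemma st16_renInt_integrableOn {μ v₀ k : ℝ} (hμ : 0 < μ) (hv : 0 < v₀) (hk : 0 < k)
    (z : ℂ) (hz : 0 < z.im) :
    IntegrableOn (renInt μ v₀ k z) (Set.Ioi k ×ˢ Set.Ioo (-k) k) := by
  obtain ⟨C, hC⟩ := st16_bound_exists hμ hv hk z hz
  refine Integrable.mono' (st16_dom_integrable hk C)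
    ((st16_meas_renInt μ v₀ k z).aestronglyMeasurable.restrict) ?_
  have hms : MeasurableSet (Set.Ioi k ×ˢ Set.Ioo (-k) k) :=
    measurableSet_Ioi.prod measurableSet_Ioo
  filter_upwards [ae_restrict_mem hms] with ts hts
  exact hC ts hts

/-- the complex cutoff integrand as a function on the plane -/
noncomputable def f16 (μ v₀ k : ℝ) (z : ℂ) (ts : ℝ × ℝ) : ℂ :=
  ((hcub μ v₀ k ((ts.1+ts.2)/2) ((ts.1-ts.2)/2) : ℝ) : ℂ)^2
      * (((ts.1+ts.2)/2 : ℝ) : ℂ) * (((ts.1-ts.2)/2 : ℝ) : ℂ)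
    / (((8*k : ℝ) : ℂ) * (z - ((disp μ ((ts.1+ts.2)/2) : ℝ) : ℂ)
          - ((disp μ ((ts.1-ts.2)/2) : ℝ) : ℂ)))

lemma st16_meas_f16 (μ v₀ k : ℝ) (z : ℂ) : Measurable (f16 μ v₀ k z) := by
  have hh := st16_meas_hcub μ v₀ k
  have hd := st16_meas_disp μ
  unfold f16
  apply Measurable.div <;> fun_prop

/-- numerator bound on the strip -/
lemma st16_num_bound {μ v₀ k : ℝ} (hμ : 0 < μ) (hv : 0 < v₀) (hk : 0 < k)
    {t s : ℝ} (ht : k < t) (hs1 : -k < s) (hs2 : s < k) :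
    hcub μ v₀ k ((t+s)/2) ((t-s)/2) ^ 2 * ((t+s)/2) * ((t-s)/2)
      ≤ 36 * μ * v₀ * (1 + Real.sqrt μ / k) * ((t + Real.sqrt μ) * (t + Real.sqrt μ)) := by
  have hp : 0 < (t+s)/2 := by linarith
  have hl : 0 < (t-s)/2 := by linarith
  have h1 := st16_hcub_bound (p := (t+s)/2) (l := (t-s)/2) hμ hv hk hp hl
  have hprod : ((t+s)/2 + Real.sqrt μ) * ((t-s)/2 + Real.sqrt μ)
      ≤ (t + Real.sqrt μ) * (t + Real.sqrt μ) := by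
    have h2 : (t+s)/2 + Real.sqrt μ ≤ t + Real.sqrt μ := by linarith
    have h3 : (t-s)/2 + Real.sqrt μ ≤ t + Real.sqrt μ := by linarith
    apply mul_le_mul h2 h3 (by linarith [Real.sqrt_nonneg μ])
      (by linarith [Real.sqrt_nonneg μ])
  calc hcub μ v₀ k ((t+s)/2) ((t-s)/2) ^ 2 * ((t+s)/2) * ((t-s)/2)
      ≤ 36 * μ * v₀ * (1 + Real.sqrt μ / k)
          * (((t+s)/2 + Real.sqrt μ) * ((t-s)/2 + Real.sqrt μ)) := h1
    _ ≤ 36 * μ * v₀ * (1 + Real.sqrt μ / k) * ((t + Real.sqrt μ) * (t + Real.sqrt μ)) :=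
        mul_le_mul_of_nonneg_left hprod (by positivity)

/-- part (i): integrability of the real z = 0 integrand -/
lemma st16_part_i {μ v₀ k Λ : ℝ} (hμ : 0 < μ) (hv : 0 < v₀) (hk : 0 < k) (hΛ : k < Λ) :
    MeasureTheory.IntegrableOn
      (fun ts : ℝ × ℝ =>
        (hcub μ v₀ k ((ts.1+ts.2)/2) ((ts.1-ts.2)/2))^2
            * ((ts.1+ts.2)/2) * ((ts.1-ts.2)/2)
          / (8*k*(0 - disp μ ((ts.1+ts.2)/2) - disp μ ((ts.1-ts.2)/2))))
      (Set.Ioo k Λ ×ˢ Set.Ioo (-k) k) := by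
  set Cc : ℝ := 36 * μ * v₀ * (1 + Real.sqrt μ / k)
      * ((Λ + Real.sqrt μ) * (Λ + Real.sqrt μ)) / (8*k*(Real.sqrt μ * k)) with hCc
  have hms : MeasurableSet (Set.Ioo k Λ ×ˢ Set.Ioo (-k) k) :=
    measurableSet_Ioo.prod measurableSet_Ioo
  have hconst : IntegrableOn (fun _ : ℝ × ℝ => Cc) (Set.Ioo k Λ ×ˢ Set.Ioo (-k) k) := by
    refine (integrableOn_const_iff enorm_ne_top).mpr (Or.inr ?_)
    rw [Measure.volume_eq_prod, Measure.prod_prod, Real.volume_Ioo, Real.volume_Ioo]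
    exact ENNReal.mul_lt_top ENNReal.ofReal_lt_top ENNReal.ofReal_lt_top
  refine Integrable.mono' hconst ?_ ?_
  · have hh := st16_meas_hcub μ v₀ k
    have hd := st16_meas_disp μ
    apply Measurable.aestronglyMeasurable ?_ |>.restrict
    apply Measurable.div <;> fun_prop
  · filter_upwards [ae_restrict_mem hms] with ts hts
    obtain ⟨⟨ht1, ht2⟩, hs1, hs2⟩ := hts
    obtain ⟨t, s⟩ := ts
    simp only at ht1 ht2 hs1 hs2 ⊢
    have hp : 0 < (t+s)/2 := by linarith
    have hl : 0 < (t-s)/2 := by linarith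
    have hE : Real.sqrt μ * k ≤ disp μ ((t+s)/2) + disp μ ((t-s)/2) := by
      have h0 := st16_E_lower hμ hk ht1 hs1 hs2
      have : Real.sqrt μ * k ≤ Real.sqrt μ * t :=
        mul_le_mul_of_nonneg_left ht1.le (Real.sqrt_nonneg μ)
      linarith
    have hE0 : (0:ℝ) < disp μ ((t+s)/2) + disp μ ((t-s)/2) :=
      lt_of_lt_of_le (by positivity) hE
    have hnum0 : 0 ≤ hcub μ v₀ k ((t+s)/2) ((t-s)/2) ^ 2 * ((t+s)/2) * ((t-s)/2) := by
      positivity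
    have hnum : hcub μ v₀ k ((t+s)/2) ((t-s)/2) ^ 2 * ((t+s)/2) * ((t-s)/2)
        ≤ 36 * μ * v₀ * (1 + Real.sqrt μ / k) * ((Λ + Real.sqrt μ) * (Λ + Real.sqrt μ)) := by
      refine le_trans (st16_num_bound hμ hv hk ht1 hs1 hs2) ?_
      have h2 : (t + Real.sqrt μ) * (t + Real.sqrt μ) ≤ (Λ + Real.sqrt μ) * (Λ + Real.sqrt μ) := by
        have : t + Real.sqrt μ ≤ Λ + Real.sqrt μ := by linarith
        apply mul_le_mul this this (by linarith [Real.sqrt_nonneg μ])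
          (by linarith [Real.sqrt_nonneg μ])
      apply mul_le_mul_of_nonneg_left h2 (by positivity)
    have hden : 8*k*(0 - disp μ ((t+s)/2) - disp μ ((t-s)/2))
        = -(8*k*(disp μ ((t+s)/2) + disp μ ((t-s)/2))) := by ring
    rw [Real.norm_eq_abs, abs_div, hden, abs_neg,
      abs_of_nonneg hnum0, abs_of_nonneg (by positivity : (0:ℝ) ≤ 8*k*(disp μ ((t+s)/2) + disp μ ((t-s)/2)))]
    rw [hCc]
    apply div_le_div₀ (mul_nonneg (by positivity) (mul_self_nonneg _)) hnum (by positivity)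
    have : 8*k*(Real.sqrt μ * k) ≤ 8*k*(disp μ ((t+s)/2) + disp μ ((t-s)/2)) :=
      mul_le_mul_of_nonneg_left hE (by positivity)
    linarith

lemma st16_lower_im' (z : ℂ) (dp dl : ℝ) :
    z.im ≤ ‖z - (dp : ℂ) - (dl : ℂ)‖ := by
  have h1 : (z - (dp : ℂ) - (dl : ℂ)).im = z.im := by simp
  calc z.im ≤ |(z - (dp : ℂ) - (dl : ℂ)).im| := by rw [h1]; exact le_abs_self _
    _ ≤ ‖z - (dp : ℂ) - (dl : ℂ)‖ := Complex.abs_im_le_norm _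

lemma st16_norm_f16 {μ v₀ k : ℝ} (w : ℂ) {ts : ℝ × ℝ} (hk : 0 < k)
    (hp : 0 ≤ (ts.1+ts.2)/2) (hl : 0 ≤ (ts.1-ts.2)/2) :
    ‖f16 μ v₀ k w ts‖
      = hcub μ v₀ k ((ts.1+ts.2)/2) ((ts.1-ts.2)/2) ^ 2 * ((ts.1+ts.2)/2) * ((ts.1-ts.2)/2)
        / (8*k * ‖w - ((disp μ ((ts.1+ts.2)/2) : ℝ) : ℂ) - ((disp μ ((ts.1-ts.2)/2) : ℝ) : ℂ)‖) := by
  unfold f16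
  rw [norm_div, norm_mul, norm_mul, norm_mul, norm_pow]
  simp only [Complex.norm_real, Real.norm_eq_abs]
  rw [abs_of_nonneg hp, abs_of_nonneg hl, abs_of_nonneg (by positivity : (0:ℝ) ≤ 8*k), sq_abs]

lemma st16_f16_integrable {μ v₀ k L : ℝ} (hμ : 0 < μ) (hv : 0 < v₀) (hk : 0 < k)
    (hL : k < L) (w : ℂ) (hw : 0 < w.im ∨ w = 0) :
    IntegrableOn (f16 μ v₀ k w) (Set.Ioo k L ×ˢ Set.Ioo (-k) k) := by
  obtain ⟨d, hd0, hdle⟩ : ∃ d : ℝ, 0 < d ∧ ∀ t s : ℝ, k < t → -k < s → s < k →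
      d ≤ ‖w - ((disp μ ((t+s)/2) : ℝ) : ℂ) - ((disp μ ((t-s)/2) : ℝ) : ℂ)‖ := by
    rcases hw with hw | hw
    · exact ⟨w.im, hw, fun t s _ _ _ => st16_lower_im' w _ _⟩
    · refine ⟨Real.sqrt μ * k, by positivity, fun t s ht hs1 hs2 => ?_⟩
      subst hw
      have h1 : (0:ℂ) - ((disp μ ((t+s)/2) : ℝ) : ℂ) - ((disp μ ((t-s)/2) : ℝ) : ℂ)
          = -(((disp μ ((t+s)/2) + disp μ ((t-s)/2) : ℝ) : ℂ)) := by push_cast; ring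
      rw [h1, norm_neg, Complex.norm_real, Real.norm_eq_abs,
        abs_of_nonneg (add_nonneg (st16_disp_nonneg _ _) (st16_disp_nonneg _ _))]
      have h2 := st16_E_lower hμ hk ht hs1 hs2
      have h3 : Real.sqrt μ * k ≤ Real.sqrt μ * t :=
        mul_le_mul_of_nonneg_left ht.le (Real.sqrt_nonneg μ)
      linarith
  set Cb : ℝ := 36 * μ * v₀ * (1 + Real.sqrt μ / k)
      * ((L + Real.sqrt μ) * (L + Real.sqrt μ)) / (8*k*d) with hCb
  have hms : MeasurableSet (Set.Ioo k L ×ˢ Set.Ioo (-k) k) :=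
    measurableSet_Ioo.prod measurableSet_Ioo
  have hconst : IntegrableOn (fun _ : ℝ × ℝ => Cb) (Set.Ioo k L ×ˢ Set.Ioo (-k) k) := by
    refine (integrableOn_const_iff enorm_ne_top).mpr (Or.inr ?_)
    rw [Measure.volume_eq_prod, Measure.prod_prod, Real.volume_Ioo, Real.volume_Ioo]
    exact ENNReal.mul_lt_top ENNReal.ofReal_lt_top ENNReal.ofReal_lt_top
  refine Integrable.mono' hconst ((st16_meas_f16 μ v₀ k w).aestronglyMeasurable.restrict) ?_
  filter_upwards [ae_restrict_mem hms] with ts hts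
  obtain ⟨⟨ht1, ht2⟩, hs1, hs2⟩ := hts
  obtain ⟨t, s⟩ := ts
  simp only at ht1 ht2 hs1 hs2
  have hp : (0:ℝ) ≤ (t+s)/2 := by linarith
  have hl : (0:ℝ) ≤ (t-s)/2 := by linarith
  rw [st16_norm_f16 w hk hp hl]
  have hnum : hcub μ v₀ k ((t+s)/2) ((t-s)/2) ^ 2 * ((t+s)/2) * ((t-s)/2)
      ≤ 36 * μ * v₀ * (1 + Real.sqrt μ / k) * ((L + Real.sqrt μ) * (L + Real.sqrt μ)) := by
    refine le_trans (st16_num_bound hμ hv hk ht1 hs1 hs2) ?_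
    have h2 : (t + Real.sqrt μ) * (t + Real.sqrt μ) ≤ (L + Real.sqrt μ) * (L + Real.sqrt μ) := by
      have : t + Real.sqrt μ ≤ L + Real.sqrt μ := by linarith
      apply mul_le_mul this this (by linarith [Real.sqrt_nonneg μ])
        (by linarith [Real.sqrt_nonneg μ])
    apply mul_le_mul_of_nonneg_left h2 (by positivity)
  rw [hCb]
  apply div_le_div₀ (mul_nonneg (by positivity) (mul_self_nonneg _)) hnum (by positivity)
  have := hdle t s ht1 hs1 hs2
  have h5 : 8*k*d ≤ 8*k*‖w - ((disp μ ((t+s)/2) : ℝ) : ℂ) - ((disp μ ((t-s)/2) : ℝ) : ℂ)‖ :=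
    mul_le_mul_of_nonneg_left this (by positivity)
  exact h5

lemma st16_SigmaCut_eq {μ v₀ k L : ℝ} (hk : 0 < k) (hL : k < L) (w : ℂ)
    (hw : IntegrableOn (f16 μ v₀ k w) (Set.Ioo k L ×ˢ Set.Ioo (-k) k)) :
    SigmaCut μ v₀ k L w
      = (1/(4*(Real.pi : ℂ)^2)) * ∫ ts in Set.Ioo k L ×ˢ Set.Ioo (-k) k, f16 μ v₀ k w ts := by
  unfold SigmaCut
  congr 1
  rw [intervalIntegral.integral_of_le hL.le]
  simp only [intervalIntegral.integral_of_le (neg_le_self hk.le)]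
  rw [MeasureTheory.integral_Ioc_eq_integral_Ioo]
  simp only [MeasureTheory.integral_Ioc_eq_integral_Ioo]
  have h2 := MeasureTheory.setIntegral_prod (μ := (volume : Measure ℝ))
    (ν := (volume : Measure ℝ)) (f16 μ v₀ k w)
    (s := Set.Ioo k L) (t := Set.Ioo (-k) k) (by rwa [← Measure.volume_eq_prod])
  rw [← Measure.volume_eq_prod] at h2
  show (∫ t in Set.Ioo k L, ∫ s in Set.Ioo (-k) k, f16 μ v₀ k w (t, s)) = _
  exact h2.symm

lemma st16_diff_eq {μ v₀ k : ℝ} (hμ : 0 < μ) (hv : 0 < v₀) (hk : 0 < k)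
    (z : ℂ) (hz : 0 < z.im) {L : ℝ} (hL : k < L) :
    SigmaCut μ v₀ k L z - SigmaCut μ v₀ k L 0
      = (1/(4*(Real.pi : ℂ)^2)) * ∫ ts in Set.Ioo k L ×ˢ Set.Ioo (-k) k, renInt μ v₀ k z ts := by
  have hiz := st16_f16_integrable hμ hv hk hL z (Or.inl hz)
  have hi0 := st16_f16_integrable hμ hv hk hL 0 (Or.inr rfl)
  rw [st16_SigmaCut_eq hk hL z hiz, st16_SigmaCut_eq hk hL 0 hi0, ← mul_sub,
    ← MeasureTheory.integral_sub hiz hi0]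
  congr 1
  apply MeasureTheory.setIntegral_congr_fun (measurableSet_Ioo.prod measurableSet_Ioo)
  rintro ⟨t, s⟩ ⟨⟨ht1, ht2⟩, hs1, hs2⟩
  simp only at ht1 ht2 hs1 hs2
  show f16 μ v₀ k z (t, s) - f16 μ v₀ k 0 (t, s) = renInt μ v₀ k z (t, s)
  unfold f16 renInt
  simp only
  set dp := disp μ ((t+s)/2) with hdp
  set dl := disp μ ((t-s)/2) with hdl
  have hp : (0:ℝ) < (t+s)/2 := by linarith
  have hl : (0:ℝ) < (t-s)/2 := by linarith
  have hE0 : (0:ℝ) < dp + dl := by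
    have h2 := st16_E_lower hμ hk ht1 hs1 hs2
    rw [← hdp, ← hdl] at h2
    have : (0:ℝ) < Real.sqrt μ * t := by
      have : (0:ℝ) < t := hk.trans ht1
      positivity
    linarith
  have h1 : ((8*k : ℝ) : ℂ) ≠ 0 := by
    rw [Complex.ofReal_ne_zero]; positivity
  have h2 : z - (dp : ℂ) - (dl : ℂ) ≠ 0 := by
    intro hcon
    have him : (z - (dp : ℂ) - (dl : ℂ)).im = z.im := by simp
    rw [hcon] at him
    simp at him
    rw [← him] at hz
    exact lt_irrefl _ hz
  have h3 : ((dp + dl : ℝ) : ℂ) ≠ 0 := Complex.ofReal_ne_zero.mpr hE0.ne'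
  have h4 : (0:ℂ) - (dp : ℂ) - (dl : ℂ) ≠ 0 := by
    intro hcon
    apply h3
    push_cast
    linear_combination -hcon
  rw [Complex.ofReal_add] at h3 ⊢
  have hb : ((8*k:ℝ):ℂ) * (z - (dp:ℂ) - (dl:ℂ)) ≠ 0 := mul_ne_zero h1 h2
  have hd : ((8*k:ℝ):ℂ) * (0 - (dp:ℂ) - (dl:ℂ)) ≠ 0 := mul_ne_zero h1 h4
  have hden : ((8*k:ℝ):ℂ) * (z - (dp:ℂ) - (dl:ℂ)) * ((dp:ℂ) + (dl:ℂ)) ≠ 0 :=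
    mul_ne_zero hb h3
  rw [div_sub_div _ _ hb hd, div_eq_div_iff (mul_ne_zero hb hd) hden]
  ring

lemma st16_tendsto {μ v₀ k : ℝ} (hμ : 0 < μ) (hv : 0 < v₀) (hk : 0 < k)
    (z : ℂ) (hz : 0 < z.im) :
    Filter.Tendsto (fun L => SigmaCut μ v₀ k L z - SigmaCut μ v₀ k L 0)
      Filter.atTop
      (𝓝 ((1/(4*(Real.pi : ℂ)^2))
            * ∫ ts in Set.Ioi k ×ˢ Set.Ioo (-k) k, renInt μ v₀ k z ts)) := by
  have hInt := st16_renInt_integrableOn hμ hv hk z hz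
  have key : Filter.Tendsto
      (fun L => ∫ ts in Set.Ioo k L ×ˢ Set.Ioo (-k) k, renInt μ v₀ k z ts)
      Filter.atTop (𝓝 (∫ ts in Set.Ioi k ×ˢ Set.Ioo (-k) k, renInt μ v₀ k z ts)) := by
    have hrw : ∀ L : ℝ, (∫ ts in Set.Ioo k L ×ˢ Set.Ioo (-k) k, renInt μ v₀ k z ts)
        = ∫ ts in Set.Ioi k ×ˢ Set.Ioo (-k) k,
            (Set.Iio L ×ˢ (Set.univ : Set ℝ)).indicator (renInt μ v₀ k z) ts := by
      intro L
      rw [MeasureTheory.setIntegral_indicator (measurableSet_Iio.prod MeasurableSet.univ)]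
      congr 1
      rw [Set.prod_inter_prod, Set.Ioi_inter_Iio, Set.inter_univ]
    simp only [hrw]
    apply MeasureTheory.tendsto_integral_filter_of_dominated_convergence
      (bound := fun ts => ‖renInt μ v₀ k z ts‖)
    · exact Filter.Eventually.of_forall (fun L =>
        (((st16_meas_renInt μ v₀ k z).indicator
          (measurableSet_Iio.prod MeasurableSet.univ)).aestronglyMeasurable).restrict)
    · exact Filter.Eventually.of_forall (fun L =>
        Filter.Eventually.of_forall (fun ts => norm_indicator_le_norm_self _ _))
    · exact hInt.norm
    · refine Filter.Eventually.of_forall (fun ts => ?_)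
      have hev : ∀ᶠ L in Filter.atTop,
          renInt μ v₀ k z ts
            = (Set.Iio L ×ˢ (Set.univ : Set ℝ)).indicator (renInt μ v₀ k z) ts := by
        filter_upwards [Filter.eventually_gt_atTop ts.1] with L hL
        have hmem : ts ∈ Set.Iio L ×ˢ (Set.univ : Set ℝ) := ⟨hL, trivial⟩
        exact (Set.indicator_of_mem hmem _).symm
      exact Filter.Tendsto.congr' hev tendsto_const_nhds
  have hev2 : ∀ᶠ L in Filter.atTop,
      (1/(4*(Real.pi : ℂ)^2)) * ∫ ts in Set.Ioo k L ×ˢ Set.Ioo (-k) k, renInt μ v₀ k z ts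
        = SigmaCut μ v₀ k L z - SigmaCut μ v₀ k L 0 := by
    filter_upwards [Filter.eventually_gt_atTop k] with L hL
    exact (st16_diff_eq hμ hv hk z hz hL).symm
  exact Filter.Tendsto.congr' hev2 (key.const_mul _)

theorem stmt16 (μ v₀ k Λ : ℝ) (hμ : 0 < μ) (hv : 0 < v₀) (hk : 0 < k) (hΛ : k < Λ) :
    -- (i) the z = 0 integrand is integrable on the compact cutoff region,
    MeasureTheory.IntegrableOn
      (fun ts : ℝ × ℝ =>
        (hcub μ v₀ k ((ts.1+ts.2)/2) ((ts.1-ts.2)/2))^2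
            * ((ts.1+ts.2)/2) * ((ts.1-ts.2)/2)
          / (8*k*(0 - disp μ ((ts.1+ts.2)/2) - disp μ ((ts.1-ts.2)/2))))
      (Set.Ioo k Λ ×ˢ Set.Ioo (-k) k) ∧
    -- since e(p) + e(l) ≥ √μ · t on the region,
    (∀ t s : ℝ, k < t → t < Λ → -k < s → s < k →
        Real.sqrt μ * t ≤ disp μ ((t+s)/2) + disp μ ((t-s)/2)) ∧
    -- (ii) for Im z > 0 the renormalized integrand is integrable on the
    -- unbounded region and Σ_k^Λ(z) − Σ_k^Λ(0) converges as Λ → ∞.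
    (∀ z : ℂ, 0 < z.im →
      MeasureTheory.IntegrableOn (renInt μ v₀ k z) (Set.Ioi k ×ˢ Set.Ioo (-k) k) ∧
      Filter.Tendsto (fun L => SigmaCut μ v₀ k L z - SigmaCut μ v₀ k L 0)
        Filter.atTop
        (𝓝 ((1/(4*(Real.pi : ℂ)^2))
              * ∫ ts in Set.Ioi k ×ˢ Set.Ioo (-k) k, renInt μ v₀ k z ts))) := by
  refine ⟨st16_part_i hμ hv hk hΛ, ?_, ?_⟩
  · exact fun t s ht _ hs1 hs2 => st16_E_lower hμ hk ht hs1 hs2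
  · intro z hz
    exact ⟨st16_renInt_integrableOn hμ hv hk z hz, st16_tendsto hμ hv hk z hz⟩
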